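/- arXiv:2502.10571 — 2 statements merged into one kernel-verified Lean document; each statement's English description precedes it below -/
import Mathlib

section
/- For every m ≥ 2 and every vector v ∈ ℝ^{3m}, there exists a matrix A ∈ S_m such that A v = −v. In other words, every vector of ℝ^{3m} can be mapped to its opposite by a suitable matrix from S_m. -/
open Matrix

open scoped Classical

/-- A complex number `μ` is an eigenvalue of the complex matrix `M`. -/
def IsEigenvalueC {n : Type*} [Fintype n] (M : Matrix n n ℂ) (μ : ℂ) : Prop :=
  ∃ v : n → ℂ, v ≠ 0 ∧ M.mulVec v = μ • v

/-- The spectral radius of a real matrix: the maximum of the moduli of the complex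
eigenvalues of its complexification. -/
noncomputable def spectralRadius' {n : Type*} [Fintype n] (A : Matrix n n ℝ) : ℝ :=
  sSup {r : ℝ | ∃ μ : ℂ, IsEigenvalueC (A.map (fun x : ℝ => (x : ℂ))) μ ∧ r = ‖μ‖}

/-- `A` has a Perron eigenvalue: its spectral radius is a nonnegative eigenvalue of `A`. -/
def HasPerronEigenvalue {n : Type*} [Fintype n] (A : Matrix n n ℝ) : Prop :=
  0 ≤ spectralRadius' A ∧ ∃ v : n → ℝ, v ≠ 0 ∧ A.mulVec v = spectralRadius' A • v

/-- The expansion index of a real matrix: the sum, over all (complex) leading eigenvalues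
(those of modulus equal to the spectral radius), of their geometric multiplicities. -/
noncomputable def expansionIndex {n : Type*} [Fintype n] [DecidableEq n]
    (A : Matrix n n ℝ) : ℕ :=
  ∑ μ ∈ (((A.map (fun x : ℝ => (x : ℂ))).charpoly.roots.toFinset).filter
      (fun μ => ‖μ‖ = spectralRadius' A)),
    Module.finrank ℂ
      (LinearMap.ker (Matrix.toLin' ((A.map (fun x : ℝ => (x : ℂ))) - μ • (1 : Matrix n n ℂ))))

/-- A (multiplicative) semigroup of matrices: a nonempty set closed under multiplication. -/
def IsMatrixSemigroup {n : Type*} [Fintype n] (S : Set (Matrix n n ℝ)) : Prop :=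
  S.Nonempty ∧ ∀ A ∈ S, ∀ B ∈ S, A * B ∈ S

/-- An irreducible set of matrices: no common invariant subspace other than `{0}` and the
whole space. -/
def MatIrreducible {n : Type*} [Fintype n] (S : Set (Matrix n n ℝ)) : Prop :=
  ¬ ∃ V : Submodule ℝ (n → ℝ), V ≠ ⊥ ∧ V ≠ ⊤ ∧ ∀ A ∈ S, ∀ x ∈ V, A.mulVec x ∈ V

/-- A proper cone: a closed convex cone with nonempty interior which is pointed. -/
def IsProperCone {n : Type*} [Fintype n] (K : Set (n → ℝ)) : Prop :=
  IsClosed K ∧ (∀ x ∈ K, ∀ y ∈ K, x + y ∈ K) ∧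
    (∀ t : ℝ, 0 ≤ t → ∀ x ∈ K, t • x ∈ K) ∧
    (interior K).Nonempty ∧ (∀ x ∈ K, -x ∈ K → x = 0)

/-- The rotation group `SO(3)`. -/
def SO3 : Set (Matrix (Fin 3) (Fin 3) ℝ) := {U | Uᵀ * U = 1 ∧ U.det = 1}

/-- The semigroup `S_m` of `3m × 3m` matrices: `A ∈ S_m` iff there are a map
`g : {1,…,m} → {1,…,m}` and rotations `U_1, …, U_m ∈ SO(3)` such that, viewing `A` as an
`m × m` array of `3 × 3` blocks, the block in position `(g i, i)` equals `U i` and all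
other blocks vanish. -/
def Sm (m : ℕ) : Set (Matrix (Fin m × Fin 3) (Fin m × Fin 3) ℝ) :=
  {A | ∃ (g : Fin m → Fin m) (U : Fin m → Matrix (Fin 3) (Fin 3) ℝ),
    (∀ i, U i ∈ SO3) ∧
    ∀ (j i : Fin m) (a b : Fin 3), A (j, a) (i, b) = if j = g i then U i a b else 0}

lemma exists_unit_orth (w : Fin 3 → ℝ) :
    ∃ n : Fin 3 → ℝ, n 0 ^ 2 + n 1 ^ 2 + n 2 ^ 2 = 1 ∧
      n 0 * w 0 + n 1 * w 1 + n 2 * w 2 = 0 := by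
  by_cases h : w 0 = 0 ∧ w 1 = 0
  · exact ⟨![1, 0, 0], by norm_num; rfl, by simp [h.1]⟩
  · have hpos : 0 < w 0 ^ 2 + w 1 ^ 2 := by
      rcases not_and_or.mp h with h | h
      · have : 0 < w 0 ^ 2 := by positivity
        nlinarith [sq_nonneg (w 1)]
      · have : 0 < w 1 ^ 2 := by positivity
        nlinarith [sq_nonneg (w 0)]
    set s := Real.sqrt (w 0 ^ 2 + w 1 ^ 2) with hs
    have hs2 : s ^ 2 = w 0 ^ 2 + w 1 ^ 2 := Real.sq_sqrt hpos.le
    have hspos : 0 < s := Real.sqrt_pos.mpr hpos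
    refine ⟨![w 1 / s, -(w 0) / s, 0], ?_, ?_⟩
    · have : (w 1 / s) ^ 2 + (-(w 0) / s) ^ 2 + (0:ℝ) ^ 2 = 1 := by
        field_simp
        linarith [hs2]
      simpa using this
    · have : (w 1 / s) * w 0 + (-(w 0) / s) * w 1 + 0 * w 2 = 0 := by
        field_simp
        ring
      simpa using this

lemma exists_so3_neg (w : Fin 3 → ℝ) : ∃ U ∈ SO3, U.mulVec w = -w := by
  obtain ⟨n, hn, ho⟩ := exists_unit_orth w
  refine ⟨Matrix.of (fun a b => 2 * n a * n b - if a = b then 1 else 0), ⟨?_, ?_⟩, ?_⟩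
  · ext a b
    simp only [Matrix.mul_apply, Matrix.transpose_apply, Matrix.of_apply,
      Fin.sum_univ_three, Matrix.one_apply]
    fin_cases a <;> fin_cases b <;> simp <;>
      first
        | linear_combination (4 * n 0 ^ 2) * hn
        | linear_combination (4 * n 1 ^ 2) * hn
        | linear_combination (4 * n 2 ^ 2) * hn
        | linear_combination (4 * n 0 * n 1) * hn
        | linear_combination (4 * n 0 * n 2) * hn
        | linear_combination (4 * n 1 * n 2) * hn
  · rw [Matrix.det_fin_three]
    simp only [Matrix.of_apply]
    simp
    linear_combination 2 * hn
  · funext a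
    simp only [Matrix.mulVec, dotProduct, Matrix.of_apply, Fin.sum_univ_three,
      Pi.neg_apply]
    fin_cases a <;> simp <;>
      first
        | linear_combination (2 * n 0) * ho
        | linear_combination (2 * n 1) * ho
        | linear_combination (2 * n 2) * ho

/-- Every vector of `ℝ^{3m}` can be mapped to its opposite by a suitable
matrix from `S_m`. -/
theorem Sm_maps_vector_to_opposite {m : ℕ} (hm : 2 ≤ m) (v : Fin m × Fin 3 → ℝ) :
    ∃ A ∈ Sm m, A.mulVec v = -v := by
  choose U hU hUv using fun i : Fin m => exists_so3_neg (fun b => v (i, b))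
  refine ⟨Matrix.of (fun p q => if p.1 = q.1 then U q.1 p.2 q.2 else 0),
    ⟨id, U, hU, fun j i a b => rfl⟩, ?_⟩
  funext p
  obtain ⟨j, a⟩ := p
  have := congrFun (hUv j) a
  simp only [Matrix.mulVec, dotProduct, Pi.neg_apply] at this ⊢
  rw [Fintype.sum_prod_type]
  rw [Finset.sum_eq_single j]
  · simpa using this
  · intro i _ hij
    simp [Matrix.of_apply, hij.symm]
  · simp
end

section
/- For every m ≥ 2, the expansion index of the semigroup S_m equals three: every matrix A ∈ S_m has expansion index at least 3, and some matrix A ∈ S_m has expansion index exactly 3. -/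
open Matrix

open scoped Classical

/-! ### Auxiliary lemmas -/

section CharpolyEig

open Polynomial

variable {n : Type*} [Fintype n] [DecidableEq n]

lemma charpoly_eval' (M : Matrix n n ℂ) (μ : ℂ) :
    M.charpoly.eval μ = (μ • (1 : Matrix n n ℂ) - M).det := by
  rw [Matrix.charpoly, ← Polynomial.coe_evalRingHom, RingHom.map_det]
  congr 1
  ext i j
  by_cases h : i = j <;>
    simp [h, charmatrix_apply, Matrix.one_apply, Matrix.smul_apply, Matrix.sub_apply,
      Matrix.diagonal_apply]

lemma isRoot_charpoly_iff (M : Matrix n n ℂ) (μ : ℂ) :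
    M.charpoly.IsRoot μ ↔ ∃ v ≠ 0, M *ᵥ v = μ • v := by
  rw [Polynomial.IsRoot, charpoly_eval', ← Matrix.exists_mulVec_eq_zero_iff]
  apply exists_congr; intro v
  apply and_congr_right; intro hv
  rw [Matrix.sub_mulVec, Matrix.smul_mulVec, Matrix.one_mulVec, sub_eq_zero, eq_comm]

lemma mem_roots_charpoly_iff (M : Matrix n n ℂ) (μ : ℂ) :
    μ ∈ M.charpoly.roots.toFinset ↔ ∃ v ≠ 0, M *ᵥ v = μ • v := by
  rw [Multiset.mem_toFinset, Polynomial.mem_roots M.charpoly_monic.ne_zero,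
    isRoot_charpoly_iff]

end CharpolyEig

section Unitary

open scoped ComplexOrder

variable {n : Type*} [Fintype n] [DecidableEq n]

lemma unitary_dot {M : Matrix n n ℂ} (hM : Mᴴ * M = 1) (x y : n → ℂ) :
    star (M *ᵥ x) ⬝ᵥ (M *ᵥ y) = star x ⬝ᵥ y := by
  rw [Matrix.star_mulVec, ← Matrix.dotProduct_mulVec, Matrix.mulVec_mulVec, hM,
    Matrix.one_mulVec]

lemma unitary_conj_mul {M : Matrix n n ℂ} (hM : Mᴴ * M = 1) {μ : ℂ} {v : n → ℂ}
    (hv : v ≠ 0) (h : M *ᵥ v = μ • v) : (starRingEnd ℂ) μ * μ = 1 := by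
  have h1 := unitary_dot hM v v
  rw [h] at h1
  have h2 : star (μ • v) ⬝ᵥ (μ • v) = (starRingEnd ℂ) μ * μ * (star v ⬝ᵥ v) := by
    rw [star_smul, smul_dotProduct, dotProduct_smul, smul_eq_mul, smul_eq_mul]
    rw [starRingEnd_apply]; ring
  rw [h2] at h1
  have hS : star v ⬝ᵥ v ≠ 0 := fun h0 => hv (dotProduct_star_self_eq_zero.mp h0)
  exact mul_right_cancel₀ hS (h1.trans (one_mul _).symm)

lemma unitary_eig_norm {M : Matrix n n ℂ} (hM : Mᴴ * M = 1) {μ : ℂ} {v : n → ℂ}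
    (hv : v ≠ 0) (h : M *ᵥ v = μ • v) : ‖μ‖ = 1 := by
  have h1 := unitary_conj_mul hM hv h
  have h2 : (Complex.normSq μ : ℂ) = 1 := by rw [← Complex.mul_conj, mul_comm]; exact h1
  have h3 : Complex.normSq μ = 1 := by exact_mod_cast h2
  have h4 : ‖μ‖ ^ 2 = 1 := by
    rw [Complex.sq_norm]; exact h3
  nlinarith [norm_nonneg μ]

lemma unitary_ker_sq {M : Matrix n n ℂ} (hM : Mᴴ * M = 1) (μ : ℂ) (v : n → ℂ)
    (h : (M - μ • 1) *ᵥ ((M - μ • 1) *ᵥ v) = 0) : (M - μ • 1) *ᵥ v = 0 := by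
  set u := (M - μ • 1) *ᵥ v with hu
  clear_value u
  by_cases h0 : u = 0
  · exact h0
  · exfalso
    have heig : M *ᵥ u = μ • u := by
      have := h
      rw [Matrix.sub_mulVec, Matrix.smul_mulVec, Matrix.one_mulVec, sub_eq_zero] at this
      exact this
    have hcm : (starRingEnd ℂ) μ * μ = 1 := unitary_conj_mul hM h0 heig
    have hadj : Mᴴ *ᵥ u = (starRingEnd ℂ) μ • u := by
      have h1 : Mᴴ *ᵥ (M *ᵥ u) = u := by
        rw [Matrix.mulVec_mulVec, hM, Matrix.one_mulVec]
      rw [heig, Matrix.mulVec_smul] at h1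
      calc Mᴴ *ᵥ u = ((starRingEnd ℂ) μ * μ) • (Mᴴ *ᵥ u) := by rw [hcm, one_smul]
        _ = (starRingEnd ℂ) μ • (μ • (Mᴴ *ᵥ u)) := by rw [smul_smul]
        _ = (starRingEnd ℂ) μ • u := by rw [h1]
    have hadj2 : (M - μ • 1)ᴴ *ᵥ u = 0 := by
      rw [Matrix.conjTranspose_sub, Matrix.sub_mulVec, hadj]
      have : (μ • (1 : Matrix n n ℂ))ᴴ = (starRingEnd ℂ) μ • (1 : Matrix n n ℂ) := by
        rw [Matrix.conjTranspose_smul, Matrix.conjTranspose_one]; rfl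
      rw [this, Matrix.smul_mulVec, Matrix.one_mulVec, sub_self]
    have hS : star u ⬝ᵥ u = 0 := by
      calc star u ⬝ᵥ u = star u ⬝ᵥ ((M - μ • 1) *ᵥ v) := by rw [← hu]
        _ = (star u ᵥ* (M - μ • 1)) ⬝ᵥ v := (Matrix.dotProduct_mulVec _ _ _)
        _ = (star ((M - μ • 1)ᴴ *ᵥ u)) ⬝ᵥ v := by
            rw [Matrix.star_mulVec, Matrix.conjTranspose_conjTranspose]
        _ = 0 := by rw [hadj2, star_zero, zero_dotProduct]
    exact h0 (dotProduct_star_self_eq_zero.mp hS)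

lemma unitary_ker_pow {M : Matrix n n ℂ} (hM : Mᴴ * M = 1) (μ : ℂ) :
    ∀ (k : ℕ) (v : n → ℂ), ((M - μ • 1) ^ (k + 1)) *ᵥ v = 0 → (M - μ • 1) *ᵥ v = 0 := by
  intro k
  induction k with
  | zero => intro v h; rwa [pow_one] at h
  | succ k ih =>
    intro v h
    have h1 : ((M - μ • 1) ^ (k + 1)) *ᵥ ((M - μ • 1) *ᵥ v) = 0 := by
      rw [Matrix.mulVec_mulVec, ← pow_succ]
      exact h
    exact unitary_ker_sq hM μ v (ih _ h1)

open Module in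
lemma finrank_finset_sup_le {ι V : Type*} [AddCommGroup V] [Module ℂ V]
    [FiniteDimensional ℂ V] (s : Finset ι) (f : ι → Submodule ℂ V) :
    finrank ℂ (s.sup f : Submodule ℂ V) ≤ ∑ i ∈ s, finrank ℂ (f i) := by
  classical
  induction s using Finset.induction_on with
  | empty => simp
  | insert _ _ hx ih =>
    rename_i a s
    rw [Finset.sup_insert, Finset.sum_insert hx]
    have h1 := Submodule.finrank_sup_add_finrank_inf_eq (f a) (s.sup f)
    omega

lemma mulVecLin_pow (N : Matrix n n ℂ) (j : ℕ) (w : n → ℂ) :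
    ((Matrix.mulVecLin N) ^ j) w = (N ^ j) *ᵥ w := by
  induction j generalizing w with
  | zero => simp [Matrix.one_mulVec]
  | succ j ih =>
    rw [pow_succ, pow_succ, Module.End.mul_apply, Matrix.mulVecLin_apply, ih,
      Matrix.mulVec_mulVec]

lemma mem_eig_iff (M : Matrix n n ℂ) (μ : ℂ) (v : n → ℂ) :
    v ∈ LinearMap.ker (Matrix.toLin' (M - μ • 1)) ↔ M *ᵥ v = μ • v := by
  rw [LinearMap.mem_ker, Matrix.toLin'_apply, Matrix.sub_mulVec, Matrix.smul_mulVec,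
    Matrix.one_mulVec, sub_eq_zero]

open Module in
lemma unitary_card_le (M : Matrix n n ℂ) (hM : Mᴴ * M = 1) :
    Fintype.card n ≤ ∑ μ ∈ M.charpoly.roots.toFinset,
      finrank ℂ (LinearMap.ker (Matrix.toLin' (M - μ • (1 : Matrix n n ℂ)))) := by
  set E : ℂ → Submodule ℂ (n → ℂ) := fun μ => LinearMap.ker (Matrix.toLin' (M - μ • 1)) with hE
  have hEle : ∀ μ, Module.End.maxGenEigenspace (Matrix.mulVecLin M) μ ≤ E μ := by
    intro μ v hv
    rw [Module.End.mem_maxGenEigenspace] at hv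
    obtain ⟨k, hk⟩ := hv
    have hsub : Matrix.mulVecLin M - μ • (1 : Module.End ℂ (n → ℂ))
        = Matrix.mulVecLin (M - μ • 1) := by
      apply LinearMap.ext; intro w
      simp [Matrix.sub_mulVec, Matrix.smul_mulVec, Matrix.one_mulVec]
    rw [hsub, mulVecLin_pow] at hk
    rw [hE]
    simp only [LinearMap.mem_ker, Matrix.toLin'_apply]
    cases k with
    | zero =>
      simp only [pow_zero, Matrix.one_mulVec] at hk
      rw [hk, Matrix.mulVec_zero]
    | succ k => exact unitary_ker_pow hM μ k v hk
  have htop : (⊤ : Submodule ℂ (n → ℂ)) ≤ (M.charpoly.roots.toFinset).sup E := by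
    rw [← Module.End.iSup_maxGenEigenspace_eq_top (Matrix.mulVecLin M)]
    apply iSup_le
    intro μ
    refine le_trans (hEle μ) ?_
    by_cases hr : μ ∈ M.charpoly.roots.toFinset
    · exact Finset.le_sup hr
    · have hbot : E μ = ⊥ := by
        rw [Submodule.eq_bot_iff]
        intro v hv
        by_contra hv0
        apply hr
        rw [mem_roots_charpoly_iff]
        rw [hE] at hv
        rw [mem_eig_iff] at hv
        exact ⟨v, hv0, hv⟩
      rw [hbot]; exact bot_le
  calc Fintype.card n = finrank ℂ (n → ℂ) := by simp [Module.finrank_pi]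
    _ = finrank ℂ (⊤ : Submodule ℂ (n → ℂ)) := (finrank_top ℂ _).symm
    _ ≤ finrank ℂ ((M.charpoly.roots.toFinset).sup E : Submodule ℂ (n → ℂ)) :=
        Submodule.finrank_mono htop
    _ ≤ ∑ μ ∈ M.charpoly.roots.toFinset, finrank ℂ (E μ) := finrank_finset_sup_le _ _

end Unitary

section SmBasic

lemma SO3_mul {U V : Matrix (Fin 3) (Fin 3) ℝ} (hU : U ∈ SO3) (hV : V ∈ SO3) :
    U * V ∈ SO3 := by
  obtain ⟨hU1, hU2⟩ := hU
  obtain ⟨hV1, hV2⟩ := hV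
  constructor
  · rw [Matrix.transpose_mul, Matrix.mul_assoc, ← Matrix.mul_assoc Uᵀ, hU1, Matrix.one_mul, hV1]
  · rw [Matrix.det_mul, hU2, hV2, one_mul]

lemma SO3_entry_le {U : Matrix (Fin 3) (Fin 3) ℝ} (hU : U ∈ SO3) (a b : Fin 3) :
    |U a b| ≤ 1 := by
  have h1 : ∑ c, U c b * U c b = 1 := by
    have := congrFun (congrFun hU.1 b) b
    simpa [Matrix.mul_apply, Matrix.transpose_apply, Matrix.one_apply] using this
  have h2 : U a b * U a b ≤ 1 := by
    rw [← h1]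
    exact Finset.single_le_sum (f := fun c => U c b * U c b)
      (fun c _ => mul_self_nonneg _) (Finset.mem_univ a)
  nlinarith [abs_nonneg (U a b), sq_abs (U a b)]

lemma Sm_mul {m : ℕ} {A B : Matrix (Fin m × Fin 3) (Fin m × Fin 3) ℝ}
    (hA : A ∈ Sm m) (hB : B ∈ Sm m) : A * B ∈ Sm m := by
  obtain ⟨g, U, hU, hA⟩ := hA
  obtain ⟨g', U', hU', hB⟩ := hB
  refine ⟨g ∘ g', fun i => U (g' i) * U' i, fun i => SO3_mul (hU _) (hU' _), ?_⟩
  intro j i a b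
  rw [Matrix.mul_apply]
  rw [Fintype.sum_prod_type]
  rw [Finset.sum_eq_single (g' i)]
  · simp only [hA, hB, if_pos rfl, Function.comp_apply]
    by_cases hj : j = g (g' i)
    · simp [if_pos hj, Matrix.mul_apply]
    · simp [if_neg hj]
  · intro l _ hl
    apply Finset.sum_eq_zero
    intro c _
    rw [hB l i c b, if_neg (by simpa using hl.symm ∘ Eq.symm), mul_zero]
  · intro h; exact absurd (Finset.mem_univ _) h

lemma Sm_entry_le {m : ℕ} {A : Matrix (Fin m × Fin 3) (Fin m × Fin 3) ℝ} (hA : A ∈ Sm m)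
    (p q : Fin m × Fin 3) : |A p q| ≤ 1 := by
  obtain ⟨g, U, hU, hA⟩ := hA
  obtain ⟨j, a⟩ := p
  obtain ⟨i, b⟩ := q
  rw [hA]
  split
  · exact SO3_entry_le (hU i) a b
  · simp

lemma Sm_pow {m : ℕ} {A : Matrix (Fin m × Fin 3) (Fin m × Fin 3) ℝ} (hA : A ∈ Sm m) (k : ℕ) :
    A ^ (k + 1) ∈ Sm m := by
  induction k with
  | zero => rwa [pow_one]
  | succ k ih => rw [pow_succ]; exact Sm_mul ih hA

lemma cx_pow {m : ℕ} (A : Matrix (Fin m × Fin 3) (Fin m × Fin 3) ℝ) (k : ℕ) :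
    (A ^ k).map (fun x : ℝ => (x : ℂ)) = (A.map (fun x : ℝ => (x : ℂ))) ^ k := by
  have h : ∀ B : Matrix (Fin m × Fin 3) (Fin m × Fin 3) ℝ,
      B.map (fun x : ℝ => (x : ℂ))
        = (Complex.ofRealHom.mapMatrix : Matrix _ _ ℝ →+* Matrix _ _ ℂ) B := fun B => rfl
  rw [h, h, map_pow]

lemma Sm_eig_le_one {m : ℕ} {A : Matrix (Fin m × Fin 3) (Fin m × Fin 3) ℝ} (hA : A ∈ Sm m)
    {μ : ℂ} {v : Fin m × Fin 3 → ℂ} (hv : v ≠ 0)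
    (h : (A.map (fun x : ℝ => (x : ℂ))) *ᵥ v = μ • v) : ‖μ‖ ≤ 1 := by
  set M := A.map (fun x : ℝ => (x : ℂ)) with hM
  by_contra hμ
  push_neg at hμ
  obtain ⟨p, hp⟩ : ∃ p, v p ≠ 0 := Function.ne_iff.mp hv
  set C : ℝ := ∑ q, ‖v q‖ with hC
  have hpow : ∀ k : ℕ, M ^ k *ᵥ v = μ ^ k • v := by
    intro k
    induction k with
    | zero => simp [Matrix.one_mulVec]
    | succ k ih =>
      rw [pow_succ, pow_succ, ← Matrix.mulVec_mulVec, h, Matrix.mulVec_smul, ih, smul_smul]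
      rw [mul_comm]
  have hbound : ∀ k : ℕ, ‖μ‖ ^ (k + 1) * ‖v p‖ ≤ C := by
    intro k
    have h1 : (M ^ (k + 1) *ᵥ v) p = μ ^ (k + 1) * v p := by
      rw [hpow (k + 1)]; rfl
    have h2 : ‖(M ^ (k + 1) *ᵥ v) p‖ ≤ C := by
      rw [Matrix.mulVec, dotProduct]
      calc ‖∑ q, (M ^ (k + 1)) p q * v q‖ ≤ ∑ q, ‖(M ^ (k + 1)) p q * v q‖ :=
            norm_sum_le _ _
        _ ≤ ∑ q, ‖v q‖ := by
            apply Finset.sum_le_sum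
            intro q _
            rw [norm_mul]
            have h3 : ‖(M ^ (k + 1)) p q‖ ≤ 1 := by
              rw [hM, ← cx_pow]
              have h4 := Sm_entry_le (Sm_pow hA k) p q
              simpa [Complex.norm_real] using h4
            calc ‖(M ^ (k + 1)) p q‖ * ‖v q‖ ≤ 1 * ‖v q‖ :=
                  mul_le_mul_of_nonneg_right h3 (norm_nonneg _)
              _ = ‖v q‖ := one_mul _
    rw [h1, norm_mul, norm_pow] at h2
    exact h2
  obtain ⟨k, hk⟩ := pow_unbounded_of_one_lt (C / ‖v p‖) hμ
  have hvp : (0:ℝ) < ‖v p‖ := norm_pos_iff.mpr hp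
  have h5 : C < ‖μ‖ ^ k * ‖v p‖ := (div_lt_iff₀ hvp).mp hk
  have h6 : ‖μ‖ ^ k ≤ ‖μ‖ ^ (k + 1) := pow_le_pow_right₀ (le_of_lt hμ) (Nat.le_succ k)
  have h7 := hbound k
  nlinarith

end SmBasic

section Cycle

lemma exists_cycle {m : ℕ} (hm : 0 < m) (g : Fin m → Fin m) :
    ∃ (i : Fin m) (k : ℕ), 0 < k ∧ g^[k] i = i ∧
      ∀ s t : ℕ, s < t → t < k → g^[s] i ≠ g^[t] i := by
  have : Nonempty (Fin m) := ⟨⟨0, hm⟩⟩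
  obtain ⟨s, t, hst, heq⟩ : ∃ s t : ℕ, s ≠ t ∧ g^[s] this.some = g^[t] this.some := by
    obtain ⟨s, t, hst, h⟩ := Finite.exists_ne_map_eq_of_infinite (fun r : ℕ => g^[r] this.some)
    exact ⟨s, t, hst, h⟩
  wlog hlt : s < t generalizing s t
  · exact this t s hst.symm heq.symm (by omega)
  set i₀ := g^[s] this.some with hi0
  have hcyc : g^[t - s] i₀ = i₀ := by
    rw [hi0, ← Function.iterate_add_apply, Nat.sub_add_cancel (le_of_lt hlt)]
    exact heq.symm
  have hex : ∃ k, 0 < k ∧ g^[k] i₀ = i₀ := ⟨t - s, by omega, hcyc⟩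
  set k := Nat.find hex with hkdef
  obtain ⟨hk0, hkc⟩ := Nat.find_spec hex
  have hmin : ∀ j, j < k → ¬(0 < j ∧ g^[j] i₀ = i₀) := fun j hj => Nat.find_min hex hj
  refine ⟨i₀, k, hk0, hkc, ?_⟩
  intro a b hab hbk habs
  have h1 : g^[k - b + a] i₀ = i₀ := by
    have h2 : g^[k - b] (g^[b] i₀) = i₀ := by
      rw [← Function.iterate_add_apply, Nat.sub_add_cancel (le_of_lt hbk)]
      exact hkc
    rw [← habs] at h2
    rw [← Function.iterate_add_apply] at h2
    exact h2
  exact hmin (k - b + a) (by omega) ⟨by omega, h1⟩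

end Cycle

noncomputable section CycMatrix

def cycB {m k' : ℕ} (U : Fin m → Matrix (Fin 3) (Fin 3) ℝ) (c : Fin (k' + 1) → Fin m) :
    Matrix (Fin (k' + 1) × Fin 3) (Fin (k' + 1) × Fin 3) ℂ :=
  Matrix.of fun p q => if p.1 = q.1 + 1 then ((U (c q.1) p.2 q.2 : ℝ) : ℂ) else 0

def cycE {m k' : ℕ} (c : Fin (k' + 1) → Fin m) :
    ((Fin (k' + 1) × Fin 3) → ℂ) →ₗ[ℂ] ((Fin m × Fin 3) → ℂ) where
  toFun w p := ∑ t : Fin (k' + 1), if p.1 = c t then w (t, p.2) else 0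
  map_add' w u := by
    funext p
    simp only [Pi.add_apply, ← Finset.sum_add_distrib]
    apply Finset.sum_congr rfl
    intro t _
    split <;> simp
  map_smul' s w := by
    funext p
    simp only [Pi.smul_apply, RingHom.id_apply, smul_eq_mul, Finset.mul_sum]
    apply Finset.sum_congr rfl
    intro t _
    split <;> simp

lemma cycE_apply_c {m k' : ℕ} (c : Fin (k' + 1) → Fin m) (hcinj : Function.Injective c)
    (w : (Fin (k' + 1) × Fin 3) → ℂ) (t : Fin (k' + 1)) (a : Fin 3) :
    cycE c w (c t, a) = w (t, a) := by
  show (∑ s : Fin (k' + 1), if c t = c s then w (s, a) else 0) = w (t, a)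
  rw [Finset.sum_eq_single t]
  · rw [if_pos rfl]
  · intro s _ hs
    rw [if_neg (fun h => hs (hcinj h).symm)]
  · intro h; exact absurd (Finset.mem_univ _) h

lemma cycE_injective {m k' : ℕ} (c : Fin (k' + 1) → Fin m) (hcinj : Function.Injective c) :
    Function.Injective (cycE c) := by
  apply LinearMap.ker_eq_bot.mp
  rw [Submodule.eq_bot_iff]
  intro w hw
  rw [LinearMap.mem_ker] at hw
  funext p
  obtain ⟨t, a⟩ := p
  have h2 := cycE_apply_c c hcinj w t a
  rw [hw] at h2
  exact h2.symm

lemma cycB_unitary {m k' : ℕ} (U : Fin m → Matrix (Fin 3) (Fin 3) ℝ)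
    (hU : ∀ i, (U i)ᵀ * U i = 1) (c : Fin (k' + 1) → Fin m) :
    (cycB U c)ᴴ * cycB U c = 1 := by
  ext p q
  obtain ⟨t, b⟩ := p
  obtain ⟨t', b'⟩ := q
  rw [Matrix.mul_apply, Fintype.sum_prod_type]
  rw [Finset.sum_eq_single (t + 1)]
  · simp only [Matrix.conjTranspose_apply, cycB, Matrix.of_apply, eq_self_iff_true, if_true]
    by_cases htt : t = t'
    · subst htt
      simp only [eq_self_iff_true, if_true]
      have h2 : ∑ a, U (c t) a b * U (c t) a b'
          = (1 : Matrix (Fin 3) (Fin 3) ℝ) b b' := by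
        rw [← hU (c t)]
        rw [Matrix.mul_apply]
        apply Finset.sum_congr rfl
        intro a _
        rw [Matrix.transpose_apply]
      have h3 : ∑ a, star ((U (c t) a b : ℝ) : ℂ) * ((U (c t) a b' : ℝ) : ℂ)
          = ((∑ a, U (c t) a b * U (c t) a b' : ℝ) : ℂ) := by
        push_cast
        apply Finset.sum_congr rfl
        intro a _
        rw [RCLike.star_def, Complex.conj_ofReal]
      rw [h3, h2]
      rw [Matrix.one_apply, Matrix.one_apply]
      by_cases hbb : b = b'
      · subst hbb; simp
      · rw [if_neg hbb, if_neg (fun h => hbb (Prod.ext_iff.mp h).2)]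
        simp
    · have hne : t + 1 ≠ t' + 1 := fun h => htt (add_right_cancel h)
      rw [Matrix.one_apply_ne (fun h => htt (Prod.ext_iff.mp h).1)]
      apply Finset.sum_eq_zero
      intro a _
      rw [if_neg hne, mul_zero]
  · intro s _ hs
    apply Finset.sum_eq_zero
    intro a _
    simp only [Matrix.conjTranspose_apply, cycB, Matrix.of_apply, if_neg hs, star_zero, zero_mul]
  · intro h; exact absurd (Finset.mem_univ _) h

lemma cyc_comm {m k' : ℕ} (g : Fin m → Fin m) (U : Fin m → Matrix (Fin 3) (Fin 3) ℝ)
    (A : Matrix (Fin m × Fin 3) (Fin m × Fin 3) ℝ)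
    (hA : ∀ (j i : Fin m) (a b : Fin 3), A (j, a) (i, b) = if j = g i then U i a b else 0)
    (c : Fin (k' + 1) → Fin m)
    (hstep : ∀ t, g (c t) = c (t + 1)) (w : (Fin (k' + 1) × Fin 3) → ℂ) :
    (A.map (fun x : ℝ => (x : ℂ))) *ᵥ (cycE c w) = cycE c ((cycB U c) *ᵥ w) := by
  funext p
  obtain ⟨j, a⟩ := p
  show ∑ q, (A.map (fun x : ℝ => (x : ℂ))) (j, a) q * cycE c w q
      = ∑ t, if j = c t then ((cycB U c) *ᵥ w) (t, a) else 0
  have lhs_eq : ∑ q, (A.map (fun x : ℝ => (x : ℂ))) (j, a) q * cycE c w q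
      = ∑ t, ∑ b, (if j = g (c t) then ((U (c t) a b : ℝ) : ℂ) * w (t, b) else 0) := by
    rw [Fintype.sum_prod_type]
    have step1 : ∀ i : Fin m, ∑ b, (A.map (fun x : ℝ => (x : ℂ))) (j, a) (i, b) * cycE c w (i, b)
        = ∑ b, ∑ t, (if i = c t then (if j = g i then ((U i a b : ℝ) : ℂ) * w (t, b) else 0)
            else 0) := by
      intro i
      apply Finset.sum_congr rfl
      intro b _
      show (A.map (fun x : ℝ => (x : ℂ))) (j, a) (i, b)
          * (∑ t, if i = c t then w (t, b) else 0) = _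
      rw [Finset.mul_sum]
      apply Finset.sum_congr rfl
      intro t _
      simp only [Matrix.map_apply, hA]
      by_cases h1 : i = c t
      · subst h1
        by_cases h2 : j = g (c t) <;> simp [h2]
      · simp [h1]
    calc ∑ i : Fin m, ∑ b, (A.map (fun x : ℝ => (x : ℂ))) (j, a) (i, b) * cycE c w (i, b)
        = ∑ i : Fin m, ∑ b, ∑ t, (if i = c t then
            (if j = g i then ((U i a b : ℝ) : ℂ) * w (t, b) else 0) else 0) := by
          apply Finset.sum_congr rfl
          intro i _
          exact step1 i
      _ = ∑ b : Fin 3, ∑ t, ∑ i : Fin m, (if i = c t then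
            (if j = g i then ((U i a b : ℝ) : ℂ) * w (t, b) else 0) else 0) := by
          rw [Finset.sum_comm]
          apply Finset.sum_congr rfl
          intro b _
          rw [Finset.sum_comm]
      _ = ∑ b : Fin 3, ∑ t, (if j = g (c t) then ((U (c t) a b : ℝ) : ℂ) * w (t, b) else 0) := by
          apply Finset.sum_congr rfl
          intro b _
          apply Finset.sum_congr rfl
          intro t _
          rw [Finset.sum_ite_eq' Finset.univ (c t)]
          rw [if_pos (Finset.mem_univ _)]
      _ = ∑ t, ∑ b, (if j = g (c t) then ((U (c t) a b : ℝ) : ℂ) * w (t, b) else 0) :=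
          Finset.sum_comm
  have rhs_eq : ∑ t, (if j = c t then ((cycB U c) *ᵥ w) (t, a) else 0)
      = ∑ s, ∑ b, (if j = c (s + 1) then ((U (c s) a b : ℝ) : ℂ) * w (s, b) else 0) := by
    have hBmv : ∀ t : Fin (k' + 1), ((cycB U c) *ᵥ w) (t, a)
        = ∑ s, ∑ b, (if t = s + 1 then ((U (c s) a b : ℝ) : ℂ) * w (s, b) else 0) := by
      intro t
      show ∑ q, cycB U c (t, a) q * w q = _
      rw [Fintype.sum_prod_type]
      apply Finset.sum_congr rfl
      intro s _
      apply Finset.sum_congr rfl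
      intro b _
      simp only [cycB, Matrix.of_apply]
      split <;> simp
    calc ∑ t, (if j = c t then ((cycB U c) *ᵥ w) (t, a) else 0)
        = ∑ t, ∑ s, ∑ b, (if j = c t then
            (if t = s + 1 then ((U (c s) a b : ℝ) : ℂ) * w (s, b) else 0) else 0) := by
          apply Finset.sum_congr rfl
          intro t _
          by_cases h : j = c t
          · rw [if_pos h, hBmv t]
            simp [h]
          · simp [h]
      _ = ∑ s, ∑ b, ∑ t, (if t = s + 1 then
            (if j = c t then ((U (c s) a b : ℝ) : ℂ) * w (s, b) else 0) else 0) := by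
          rw [Finset.sum_comm]
          apply Finset.sum_congr rfl
          intro s _
          rw [Finset.sum_comm]
          apply Finset.sum_congr rfl
          intro b _
          apply Finset.sum_congr rfl
          intro t _
          by_cases h1 : j = c t <;> by_cases h2 : t = s + 1 <;> simp [h1, h2]
      _ = ∑ s, ∑ b, (if j = c (s + 1) then ((U (c s) a b : ℝ) : ℂ) * w (s, b) else 0) := by
          apply Finset.sum_congr rfl
          intro s _
          apply Finset.sum_congr rfl
          intro b _
          rw [Finset.sum_ite_eq' Finset.univ (s + 1)]
          rw [if_pos (Finset.mem_univ _)]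
  rw [lhs_eq, rhs_eq]
  apply Finset.sum_congr rfl
  intro t _
  apply Finset.sum_congr rfl
  intro b _
  rw [hstep t]

end CycMatrix


section Lower

lemma Sm_lower {m : ℕ} (hm : 2 ≤ m) {A : Matrix (Fin m × Fin 3) (Fin m × Fin 3) ℝ}
    (hA : A ∈ Sm m) : 3 ≤ expansionIndex A := by
  have hA' := hA
  obtain ⟨g, U, hU, hAf⟩ := hA
  obtain ⟨i₀, k, hk0, hkc, hdist⟩ := exists_cycle (by omega : 0 < m) g
  obtain ⟨k', rfl⟩ : ∃ k', k = k' + 1 := ⟨k - 1, by omega⟩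
  set c : Fin (k' + 1) → Fin m := fun t => g^[t.val] i₀ with hc
  have hcinj : Function.Injective c := by
    intro s t hst
    rcases lt_trichotomy s.val t.val with h | h | h
    · exact absurd hst (hdist s.val t.val h t.isLt)
    · exact Fin.ext h
    · exact absurd hst.symm (hdist t.val s.val h s.isLt)
  have hstep : ∀ t, g (c t) = c (t + 1) := by
    intro t
    show g (g^[t.val] i₀) = g^[((t + 1 : Fin (k' + 1))).val] i₀
    rw [← Function.iterate_succ_apply' g t.val i₀]
    rw [Fin.val_add_one]
    split
    · rename_i h
      rw [h, Fin.val_last]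
      rw [Function.iterate_zero_apply]
      exact hkc
    · rfl
  set M := A.map (fun x : ℝ => (x : ℂ)) with hMdef
  set B := cycB U c with hBdef
  have hBu : Bᴴ * B = 1 := cycB_unitary U (fun i => (hU i).1) c
  have hEinj := cycE_injective c hcinj
  have transfer : ∀ (μ : ℂ) (w : (Fin (k' + 1) × Fin 3) → ℂ),
      B *ᵥ w = μ • w → M *ᵥ (cycE c w) = μ • (cycE c w) := by
    intro μ w hw
    rw [hMdef, cyc_comm g U A hAf c hstep w, hw, LinearMap.map_smul]
  have hEne : ∀ w : (Fin (k' + 1) × Fin 3) → ℂ, w ≠ 0 → cycE c w ≠ 0 := by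
    intro w hw h
    exact hw (hEinj (h.trans (map_zero _).symm))
  have hub : ∀ r ∈ {r : ℝ | ∃ μ : ℂ, IsEigenvalueC M μ ∧ r = ‖μ‖}, r ≤ 1 := by
    rintro r ⟨μ, ⟨v, hv0, hveig⟩, rfl⟩
    exact Sm_eig_le_one hA' hv0 hveig
  have hdeg : B.charpoly.natDegree ≠ 0 := by
    rw [Matrix.charpoly_natDegree_eq_dim]
    simp [Fintype.card_prod]
  obtain ⟨μ₁, hμ₁⟩ : ∃ z, B.charpoly.IsRoot z :=
    Complex.exists_root (Polynomial.natDegree_pos_iff_degree_pos.mp (Nat.pos_of_ne_zero hdeg))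
  obtain ⟨w₁, hw₁0, hw₁⟩ := (isRoot_charpoly_iff B μ₁).mp hμ₁
  have hn₁ : ‖μ₁‖ = 1 := unitary_eig_norm hBu hw₁0 hw₁
  have h1mem : (1:ℝ) ∈ {r : ℝ | ∃ μ : ℂ, IsEigenvalueC M μ ∧ r = ‖μ‖} :=
    ⟨μ₁, ⟨cycE c w₁, hEne w₁ hw₁0, transfer μ₁ w₁ hw₁⟩, hn₁.symm⟩
  have hρ : spectralRadius' A = 1 := by
    have hsup_le : spectralRadius' A ≤ 1 := Real.sSup_le hub zero_le_one
    have hle_sup : (1:ℝ) ≤ spectralRadius' A :=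
      le_csSup ⟨1, fun r hr => hub r hr⟩ h1mem
    linarith
  have hsubset : B.charpoly.roots.toFinset ⊆
      (M.charpoly.roots.toFinset).filter (fun μ => ‖μ‖ = spectralRadius' A) := by
    intro μ hμ
    rw [Multiset.mem_toFinset, Polynomial.mem_roots B.charpoly_monic.ne_zero] at hμ
    obtain ⟨w, hw0, hw⟩ := (isRoot_charpoly_iff B μ).mp hμ
    rw [Finset.mem_filter]
    refine ⟨?_, ?_⟩
    · rw [mem_roots_charpoly_iff]
      exact ⟨cycE c w, hEne w hw0, transfer μ w hw⟩
    · rw [hρ]; exact unitary_eig_norm hBu hw0 hw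
  have hpt : ∀ μ ∈ B.charpoly.roots.toFinset,
      Module.finrank ℂ (LinearMap.ker (Matrix.toLin' (B - μ • 1)))
        ≤ Module.finrank ℂ (LinearMap.ker (Matrix.toLin' (M - μ • 1))) := by
    intro μ _
    have hmap : (LinearMap.ker (Matrix.toLin' (B - μ • 1))).map (cycE c)
        ≤ LinearMap.ker (Matrix.toLin' (M - μ • 1)) := by
      rintro v ⟨w, hw, rfl⟩
      rw [SetLike.mem_coe] at hw
      rw [mem_eig_iff] at hw ⊢
      exact transfer μ w hw
    calc Module.finrank ℂ (LinearMap.ker (Matrix.toLin' (B - μ • 1)))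
        = Module.finrank ℂ ((LinearMap.ker (Matrix.toLin' (B - μ • 1))).map (cycE c)) :=
          (Submodule.equivMapOfInjective _ hEinj _).finrank_eq
      _ ≤ _ := Submodule.finrank_mono hmap
  have hcard := unitary_card_le B hBu
  have hsum : ∑ μ ∈ B.charpoly.roots.toFinset,
      Module.finrank ℂ (LinearMap.ker (Matrix.toLin' (B - μ • 1)))
      ≤ expansionIndex A := by
    calc ∑ μ ∈ B.charpoly.roots.toFinset,
        Module.finrank ℂ (LinearMap.ker (Matrix.toLin' (B - μ • 1)))
        ≤ ∑ μ ∈ B.charpoly.roots.toFinset,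
            Module.finrank ℂ (LinearMap.ker (Matrix.toLin' (M - μ • 1))) :=
          Finset.sum_le_sum hpt
      _ ≤ ∑ μ ∈ (M.charpoly.roots.toFinset).filter (fun μ => ‖μ‖ = spectralRadius' A),
            Module.finrank ℂ (LinearMap.ker (Matrix.toLin' (M - μ • 1))) :=
          Finset.sum_le_sum_of_subset hsubset
      _ = expansionIndex A := rfl
  have hcard3 : 3 ≤ Fintype.card (Fin (k' + 1) × Fin 3) := by
    simp [Fintype.card_prod]
  omega


end Lower

section Witness
variable {m : ℕ} [NeZero m]

def wA (m : ℕ) [NeZero m] : Matrix (Fin m × Fin 3) (Fin m × Fin 3) ℝ :=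
  Matrix.of fun p q => if p.1 = (0 : Fin m) then (1 : Matrix (Fin 3) (Fin 3) ℝ) p.2 q.2 else 0

lemma wA_mem : wA m ∈ Sm m := by
  refine ⟨fun _ => 0, fun _ => 1, fun i => ⟨by simp [Matrix.transpose_one], Matrix.det_one⟩, ?_⟩
  intro j i a b
  rfl

lemma wA_idem : wA m * wA m = wA m := by
  ext p q
  rw [Matrix.mul_apply, Fintype.sum_prod_type]
  rw [Finset.sum_eq_single (0 : Fin m)]
  · show ∑ cc : Fin 3, wA m p ((0:Fin m), cc) * wA m ((0:Fin m), cc) q = wA m p q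
    by_cases hp : p.1 = 0
    · have e1 : ∀ cc, wA m p ((0:Fin m), cc) = (1 : Matrix (Fin 3) (Fin 3) ℝ) p.2 cc := by
        intro cc; simp [wA, hp]
      have e2 : ∀ cc, wA m ((0:Fin m), cc) q = (1 : Matrix (Fin 3) (Fin 3) ℝ) cc q.2 := by
        intro cc; simp [wA]
      have e3 : wA m p q = (1 : Matrix (Fin 3) (Fin 3) ℝ) p.2 q.2 := by
        show (if p.1 = (0:Fin m) then (1 : Matrix (Fin 3) (Fin 3) ℝ) p.2 q.2 else 0) = _
        rw [if_pos hp]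
      simp only [e1, e2, e3]
      rw [← Matrix.mul_apply, Matrix.one_mul]
    · have e1 : ∀ cc, wA m p ((0:Fin m), cc) = 0 := by
        intro cc
        show (if p.1 = (0:Fin m) then (1 : Matrix (Fin 3) (Fin 3) ℝ) p.2 cc else 0) = 0
        rw [if_neg hp]
      have e3 : wA m p q = 0 := by
        show (if p.1 = (0:Fin m) then (1 : Matrix (Fin 3) (Fin 3) ℝ) p.2 q.2 else 0) = 0
        rw [if_neg hp]
      simp [e1, e3]
  · intro l _ hl
    apply Finset.sum_eq_zero
    intro cc _
    have : wA m (l, cc) q = 0 := by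
      show (if l = (0:Fin m) then (1 : Matrix (Fin 3) (Fin 3) ℝ) cc q.2 else 0) = 0
      rw [if_neg hl]
    rw [this, mul_zero]
  · intro h; exact absurd (Finset.mem_univ _) h

lemma wA_cx_idem :
    ((wA m).map (fun x : ℝ => (x : ℂ))) * ((wA m).map (fun x : ℝ => (x : ℂ)))
      = (wA m).map (fun x : ℝ => (x : ℂ)) := by
  have h : ∀ B : Matrix (Fin m × Fin 3) (Fin m × Fin 3) ℝ,
      B.map (fun x : ℝ => (x : ℂ))
        = (Complex.ofRealHom.mapMatrix : Matrix _ _ ℝ →+* Matrix _ _ ℂ) B := fun B => rfl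
  rw [h, ← _root_.map_mul, wA_idem]

lemma wA_eig01 {μ : ℂ} {v : Fin m × Fin 3 → ℂ} (hv : v ≠ 0)
    (h : ((wA m).map (fun x : ℝ => (x : ℂ))) *ᵥ v = μ • v) : μ = 0 ∨ μ = 1 := by
  have h1 : (μ * μ) • v = μ • v := by
    have h2 : ((wA m).map (fun x : ℝ => (x : ℂ))) *ᵥ
        (((wA m).map (fun x : ℝ => (x : ℂ))) *ᵥ v) = ((wA m).map (fun x : ℝ => (x : ℂ))) *ᵥ v := by
      rw [Matrix.mulVec_mulVec, wA_cx_idem]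
    rw [h, Matrix.mulVec_smul, h, smul_smul] at h2
    exact h2
  have h3 : (μ * μ - μ) • v = 0 := by
    rw [sub_smul, h1, sub_self]
  rcases smul_eq_zero.mp h3 with h4 | h4
  · have h5 : μ * (μ - 1) = 0 := by linear_combination h4
    rcases mul_eq_zero.mp h5 with h6 | h6
    · exact Or.inl h6
    · exact Or.inr (sub_eq_zero.mp h6)
  · exact absurd h4 hv

lemma wA_has_one :
    ∃ v : Fin m × Fin 3 → ℂ, v ≠ 0 ∧
      ((wA m).map (fun x : ℝ => (x : ℂ))) *ᵥ v = (1 : ℂ) • v := by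
  refine ⟨fun p => if p = ((0 : Fin m), (0 : Fin 3)) then 1 else 0, ?_, ?_⟩
  · intro h
    have := congrFun h ((0 : Fin m), (0 : Fin 3))
    simp at this
  · funext p
    rw [one_smul]
    show ∑ q, ((wA m).map (fun x : ℝ => (x : ℂ))) p q
        * (if q = ((0 : Fin m), (0 : Fin 3)) then 1 else 0) = _
    rw [Finset.sum_eq_single ((0 : Fin m), (0 : Fin 3))]
    · simp only [eq_self_iff_true, if_true, mul_one]
      show ((wA m (p.1, p.2) ((0:Fin m), (0:Fin 3)) : ℝ) : ℂ) = _
      by_cases hp : p = ((0 : Fin m), (0 : Fin 3))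
      · rw [if_pos hp, hp]
        show ((wA m ((0:Fin m), (0:Fin 3)) ((0:Fin m), (0:Fin 3)) : ℝ) : ℂ) = 1
        have : wA m ((0:Fin m), (0:Fin 3)) ((0:Fin m), (0:Fin 3)) = 1 := by
          show (if (0:Fin m) = (0 : Fin m) then (1 : Matrix (Fin 3) (Fin 3) ℝ) 0 0 else 0) = 1
          rw [if_pos rfl, Matrix.one_apply_eq]
        rw [this]; norm_num
      · rw [if_neg hp]
        have : wA m (p.1, p.2) ((0:Fin m), (0:Fin 3)) = 0 := by
          show (if p.1 = (0:Fin m) then (1 : Matrix (Fin 3) (Fin 3) ℝ) p.2 0 else 0) = 0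
          by_cases h1 : p.1 = 0
          · rw [if_pos h1, Matrix.one_apply]
            rw [if_neg]
            intro h2
            exact hp (Prod.ext h1 h2)
          · rw [if_neg h1]
        rw [this]; norm_num
    · intro q _ hq
      rw [if_neg hq, mul_zero]
    · intro h; exact absurd (Finset.mem_univ _) h

lemma wA_rho (hm : 2 ≤ m) : spectralRadius' (wA m) = 1 := by
  have hub : ∀ r ∈ {r : ℝ | ∃ μ : ℂ,
      IsEigenvalueC ((wA m).map (fun x : ℝ => (x : ℂ))) μ ∧ r = ‖μ‖}, r ≤ 1 := by
    rintro r ⟨μ, ⟨v, hv0, hveig⟩, rfl⟩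
    exact Sm_eig_le_one wA_mem hv0 hveig
  obtain ⟨v, hv0, hv⟩ := wA_has_one (m := m)
  have h1mem : (1:ℝ) ∈ {r : ℝ | ∃ μ : ℂ,
      IsEigenvalueC ((wA m).map (fun x : ℝ => (x : ℂ))) μ ∧ r = ‖μ‖} :=
    ⟨1, ⟨v, hv0, hv⟩, norm_one.symm⟩
  have h2 := Real.sSup_le hub zero_le_one
  have h3 := le_csSup ⟨1, fun r hr => hub r hr⟩ h1mem
  exact le_antisymm h2 h3

lemma wA_upper (hm : 2 ≤ m) : expansionIndex (wA m) ≤ 3 := by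
  have hsub : (((wA m).map (fun x : ℝ => (x : ℂ))).charpoly.roots.toFinset).filter
      (fun μ => ‖μ‖ = spectralRadius' (wA m)) ⊆ {1} := by
    intro μ hμ
    rw [Finset.mem_filter] at hμ
    obtain ⟨hr, hn⟩ := hμ
    rw [mem_roots_charpoly_iff] at hr
    obtain ⟨v, hv0, hv⟩ := hr
    rcases wA_eig01 hv0 hv with h | h
    · exfalso
      rw [h, wA_rho hm] at hn
      simp at hn
    · rw [h]; exact Finset.mem_singleton_self 1
  have hle : expansionIndex (wA m) ≤
      ∑ μ ∈ ({1} : Finset ℂ), Module.finrank ℂ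
        (LinearMap.ker (Matrix.toLin' (((wA m).map (fun x : ℝ => (x : ℂ)))
          - μ • (1 : Matrix (Fin m × Fin 3) (Fin m × Fin 3) ℂ)))) :=
    Finset.sum_le_sum_of_subset hsub
  rw [Finset.sum_singleton] at hle
  refine le_trans hle ?_
  have hminj : Function.Injective
      ((LinearMap.funLeft ℂ ℂ (fun a : Fin 3 => ((0 : Fin m), a))).comp
        (LinearMap.ker (Matrix.toLin' (((wA m).map (fun x : ℝ => (x : ℂ)))
          - (1 : ℂ) • (1 : Matrix (Fin m × Fin 3) (Fin m × Fin 3) ℂ)))).subtype) := by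
    apply LinearMap.ker_eq_bot.mp
    rw [Submodule.eq_bot_iff]
    intro u hu
    rw [LinearMap.mem_ker, LinearMap.comp_apply] at hu
    have hu' : ∀ a : Fin 3, u.1 ((0 : Fin m), a) = 0 := by
      intro a
      have := congrFun hu a
      simpa [LinearMap.funLeft_apply] using this
    have hmem := u.2
    rw [mem_eig_iff] at hmem
    have hfix : ((wA m).map (fun x : ℝ => (x : ℂ))) *ᵥ u.1 = u.1 := by
      rw [hmem]; exact one_smul _ _
    apply Subtype.ext
    funext p
    show u.1 p = 0
    by_cases hp : p.1 = 0
    · have hpe : p = ((0 : Fin m), p.2) := Prod.ext hp rfl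
      rw [hpe]
      exact hu' p.2
    · have h5 : (((wA m).map (fun x : ℝ => (x : ℂ))) *ᵥ u.1) p = 0 := by
        show ∑ q, ((wA m).map (fun x : ℝ => (x : ℂ))) p q * u.1 q = 0
        apply Finset.sum_eq_zero
        intro q _
        have hz : wA m (p.1, p.2) q = 0 := by
          show (if p.1 = (0:Fin m) then (1 : Matrix (Fin 3) (Fin 3) ℝ) p.2 q.2 else 0) = 0
          rw [if_neg hp]
        show ((wA m (p.1, p.2) q : ℝ) : ℂ) * u.1 q = 0
        rw [hz]
        norm_num
      rw [hfix] at h5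
      exact h5
  have h8 := LinearMap.finrank_le_finrank_of_injective hminj
  simpa using h8

end Witness


/-- The expansion index of the semigroup `S_m` equals three: every matrix of
`S_m` has expansion index at least `3`, and some matrix has expansion index exactly `3`. -/
theorem Sm_index_three {m : ℕ} (hm : 2 ≤ m) :
    (∀ A ∈ Sm m, 3 ≤ expansionIndex A) ∧ (∃ A ∈ Sm m, expansionIndex A = 3) := by
  haveI : NeZero m := ⟨by omega⟩
  exact ⟨fun A hA => Sm_lower hm hA,
    ⟨wA m, wA_mem, le_antisymm (wA_upper hm) (Sm_lower hm wA_mem)⟩⟩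
end
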